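/- Let q be a nonnegative continuous function on [0,∞) and let u ∈ C²([0,∞)) satisfy u'' = q·u with u(0) = 0 and u'(0) = 1. If u' is bounded on [0,∞) (equivalently, since u' is monotone, the limit L = lim_{t→∞} u'(t) is finite), then ∫₀^∞ t·q(t) dt < ∞; moreover ∫₀^∞ t·q(t) dt ≤ L − 1. -/

import Mathlib

open MeasureTheory Set Filter Topology

/-- Let `q` be a nonnegative continuous function on `[0,∞)` and let
`u ∈ C²([0,∞))` satisfy `u'' = q·u` with `u 0 = 0`, `u' 0 = 1`. If `u'` is bounded on
`[0,∞)`, i.e. (since `u'` is monotone) `u'` tends to a finite limit `L` at `+∞`,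
then `∫₀^∞ t·q t dt < ∞` and moreover `∫₀^∞ t·q t dt ≤ L − 1`. -/
theorem stmt2 (q u u' u'' : ℝ → ℝ) (L : ℝ)
    (hq_cont : ContinuousOn q (Set.Ici 0))
    (hq_nonneg : ∀ t ∈ Set.Ici (0:ℝ), 0 ≤ q t)
    (hu' : ∀ t ∈ Set.Ici (0:ℝ), HasDerivWithinAt u (u' t) (Set.Ici 0) t)
    (hu'' : ∀ t ∈ Set.Ici (0:ℝ), HasDerivWithinAt u' (u'' t) (Set.Ici 0) t)
    (hu''_cont : ContinuousOn u'' (Set.Ici 0))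
    (hode : ∀ t ∈ Set.Ici (0:ℝ), u'' t = q t * u t)
    (hu0 : u 0 = 0) (hu'0 : u' 0 = 1)
    (hbdd : ∃ C : ℝ, ∀ t ∈ Set.Ici (0:ℝ), u' t ≤ C)
    (hL : Filter.Tendsto u' Filter.atTop (nhds L)) :
    MeasureTheory.IntegrableOn (fun t => t * q t) (Set.Ici 0) ∧
      (∫ t in Set.Ici (0:ℝ), t * q t) ≤ L - 1 := by
  -- continuity of u and u'
  have hu'cont : ContinuousOn u' (Ici 0) := fun t ht =>
    (hu'' t ht).differentiableWithinAt.continuousWithinAt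
  have hucont : ContinuousOn u (Ici 0) := fun t ht =>
    (hu' t ht).differentiableWithinAt.continuousWithinAt
  -- generic monotonicity helper
  have mono_aux : ∀ (f f' : ℝ → ℝ) (b : ℝ),
      (∀ t ∈ Ici (0:ℝ), HasDerivWithinAt f (f' t) (Ici 0) t) →
      (∀ t ∈ Icc (0:ℝ) b, 0 ≤ f' t) → MonotoneOn f (Icc (0:ℝ) b) := by
    intro f f' b hf hf'
    apply monotoneOn_of_hasDerivWithinAt_nonneg (convex_Icc 0 b)
    · exact fun t ht => ((hf t ht.1).differentiableWithinAt.continuousWithinAt).mono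
        (fun x hx => hx.1)
    · intro x hx
      rw [interior_Icc] at hx ⊢
      exact (hf x (le_of_lt hx.1)).mono (fun y hy => le_of_lt hy.1)
    · intro x hx
      rw [interior_Icc] at hx
      exact hf' x ⟨le_of_lt hx.1, le_of_lt hx.2⟩
  -- from u' ≥ c on [0,b] deduce u t ≥ c * t
  have lower_aux : ∀ (c b : ℝ), (∀ t ∈ Icc (0:ℝ) b, c ≤ u' t) →
      ∀ t ∈ Icc (0:ℝ) b, c * t ≤ u t := by
    intro c b hc t ht
    have hm : MonotoneOn (fun s => u s - c * s) (Icc (0:ℝ) b) := by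
      apply mono_aux _ (fun s => u' s - c)
      · intro s hs
        have h := (hu' s hs).sub (((hasDerivWithinAt_id s (Ici 0)).const_mul c))
        simp only [id, mul_one] at h
        exact h
      · intro s hs
        simpa using hc s hs
    have := hm (left_mem_Icc.mpr (ht.1.trans ht.2)) ht ht.1
    simp [hu0] at this
    linarith
  -- key : u' ≥ 1 on [0,∞)
  have key : ∀ t ∈ Ici (0:ℝ), 1 ≤ u' t := by
    by_contra hcon
    push_neg at hcon
    obtain ⟨t₀, ht₀, ht₀'⟩ := hcon
    set B := {t : ℝ | 0 ≤ t ∧ u' t < 1} with hB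
    have hBne : B.Nonempty := ⟨t₀, ht₀, ht₀'⟩
    have hBbd : BddBelow B := ⟨0, fun x hx => hx.1⟩
    set T := sInf B with hT
    have hT0 : 0 ≤ T := le_csInf hBne (fun x hx => hx.1)
    have hbelow : ∀ t, 0 ≤ t → t < T → 1 ≤ u' t := by
      intro t h0 hlt
      by_contra hc
      exact absurd (csInf_le hBbd ⟨h0, lt_of_not_ge hc⟩) (not_le.mpr hlt)
    have hu'T : 1 ≤ u' T := by
      rcases eq_or_lt_of_le hT0 with h | h
      · rw [← h, hu'0]
      · have hne : (𝓝[Ioo (0:ℝ) T] T).NeBot := right_nhdsWithin_Ioo_neBot h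
        have htd : Tendsto u' (𝓝[Ioo (0:ℝ) T] T) (𝓝 (u' T)) :=
          (hu'cont T hT0).mono_left (nhdsWithin_mono _ (fun x hx => le_of_lt hx.1))
        refine ge_of_tendsto htd ?_
        filter_upwards [self_mem_nhdsWithin] with x hx
        exact hbelow x (le_of_lt hx.1) hx.2
    have hIccT : ∀ t ∈ Icc (0:ℝ) T, 1 ≤ u' t := by
      intro t ht
      rcases lt_or_eq_of_le ht.2 with h | h
      · exact hbelow t ht.1 h
      · rw [h]; exact hu'T
    -- find δ with u' ≥ 1/2 on [T, T+δ]
    have hev : ∀ᶠ x in 𝓝[Ici 0] T, (1:ℝ)/2 < u' x :=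
      (hu'cont T hT0).eventually_const_lt (by linarith)
    obtain ⟨δ, hδ, hδ'⟩ := Metric.mem_nhdsWithin_iff.mp hev
    set b := T + δ/2 with hb
    have hTb : T < b := by simp [hb]; linarith
    have half : ∀ t ∈ Icc (0:ℝ) b, (1:ℝ)/2 ≤ u' t := by
      intro t ht
      rcases le_or_gt t T with h | h
      · linarith [hIccT t ⟨ht.1, h⟩]
      · have : dist t T < δ := by
          rw [Real.dist_eq, abs_of_nonneg (by linarith)]
          have := ht.2
          rw [hb] at this
          linarith
        exact le_of_lt (hδ' ⟨Metric.mem_ball.mpr this, ht.1⟩)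
    -- u ≥ t/2 ≥ 0 on [0,b]
    have hun : ∀ t ∈ Icc (0:ℝ) b, 0 ≤ u t := by
      intro t ht
      have := lower_aux (1/2) b half t ht
      nlinarith [ht.1]
    -- so u'' ≥ 0 on [0,b], u' monotone, u' ≥ 1 on [0,b]
    have hu'mono : MonotoneOn u' (Icc (0:ℝ) b) := by
      apply mono_aux u' u'' b hu''
      intro t ht
      rw [hode t ht.1]
      exact mul_nonneg (hq_nonneg t ht.1) (hun t ht)
    have hge1 : ∀ t ∈ Icc (0:ℝ) b, 1 ≤ u' t := by
      intro t ht
      have := hu'mono (left_mem_Icc.mpr (ht.1.trans ht.2)) ht ht.1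
      rw [hu'0] at this
      exact this
    -- contradiction: B has an element < b
    obtain ⟨x, hxB, hxb⟩ : ∃ x ∈ B, x < b := by
      by_contra hc
      push_neg at hc
      exact absurd (le_csInf hBne hc) (not_le.mpr hTb)
    exact absurd (hge1 x ⟨hxB.1, le_of_lt hxb⟩) (not_le.mpr hxB.2)
  -- consequences
  have hu_ge : ∀ t ∈ Ici (0:ℝ), t ≤ u t := by
    intro t ht
    have := lower_aux 1 t (fun s hs => key s hs.1) t ⟨ht, le_refl t⟩
    linarith
  have hptwise : ∀ t ∈ Ici (0:ℝ), t * q t ≤ u'' t := by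
    intro t ht
    rw [hode t ht, mul_comm]
    exact mul_le_mul_of_nonneg_left (hu_ge t ht) (hq_nonneg t ht)
  have hu''nonneg : ∀ t ∈ Ici (0:ℝ), 0 ≤ u'' t := by
    intro t ht
    rw [hode t ht]
    exact mul_nonneg (hq_nonneg t ht) (le_trans ht (hu_ge t ht))
  have hu'monoAll : ∀ b : ℝ, MonotoneOn u' (Icc (0:ℝ) b) := fun b =>
    mono_aux u' u'' b hu'' (fun t ht => hu''nonneg t ht.1)
  have hu'leL : ∀ t ∈ Ici (0:ℝ), u' t ≤ L := by
    intro t ht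
    refine ge_of_tendsto hL ?_
    filter_upwards [eventually_ge_atTop t] with s hs
    exact hu'monoAll s ⟨ht, hs⟩ ⟨ht.trans hs, le_refl s⟩ hs
  -- FTC
  have hFTC : ∀ b : ℝ, 0 ≤ b → ∫ y in (0:ℝ)..b, u'' y = u' b - 1 := by
    intro b hbn
    rw [← hu'0]
    apply intervalIntegral.integral_eq_sub_of_hasDeriv_right_of_le hbn
    · exact hu'cont.mono (fun x hx => hx.1)
    · intro x hx
      exact (hu'' x (le_of_lt hx.1)).mono (fun y hy => le_of_lt (lt_trans hx.1 hy))
    · apply ContinuousOn.intervalIntegrable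
      rw [uIcc_of_le hbn]
      exact hu''_cont.mono (fun x hx => hx.1)
  have hf_cont : ContinuousOn (fun t => t * q t) (Ici 0) :=
    continuous_id.continuousOn.mul hq_cont
  have hf_intOn : ∀ b : ℝ, 0 ≤ b → IntegrableOn (fun t => t * q t) (Icc 0 b) :=
    fun b _ => (hf_cont.mono (fun x hx => hx.1)).integrableOn_compact isCompact_Icc
  have hu''_intOn : ∀ b : ℝ, 0 ≤ b → IntegrableOn u'' (Icc 0 b) :=
    fun b _ => (hu''_cont.mono (fun x hx => hx.1)).integrableOn_compact isCompact_Icc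
  have hbound : ∀ b : ℝ, 0 ≤ b → (∫ y in (0:ℝ)..b, y * q y) ≤ L - 1 := by
    intro b hbn
    have hfi : IntervalIntegrable (fun y => y * q y) MeasureTheory.volume 0 b := by
      apply ContinuousOn.intervalIntegrable
      rw [uIcc_of_le hbn]
      exact hf_cont.mono (fun x hx => hx.1)
    have hgi : IntervalIntegrable u'' MeasureTheory.volume 0 b := by
      apply ContinuousOn.intervalIntegrable
      rw [uIcc_of_le hbn]
      exact hu''_cont.mono (fun x hx => hx.1)
    have h1 : (∫ y in (0:ℝ)..b, y * q y) ≤ ∫ y in (0:ℝ)..b, u'' y :=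
      intervalIntegral.integral_mono_on hbn hfi hgi (fun x hx => hptwise x hx.1)
    rw [hFTC b hbn] at h1
    have := hu'leL b hbn
    linarith
  have hnorm : ∀ b : ℝ, 0 ≤ b →
      (∫ y in (0:ℝ)..b, ‖y * q y‖) = ∫ y in (0:ℝ)..b, y * q y := by
    intro b hbn
    apply intervalIntegral.integral_congr
    intro x hx
    rw [uIcc_of_le hbn] at hx
    exact Real.norm_of_nonneg (mul_nonneg hx.1 (hq_nonneg x hx.1))
  -- integrability on Ioi 0
  have hint : IntegrableOn (fun t => t * q t) (Ioi 0) := by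
    apply integrableOn_Ioi_of_intervalIntegral_norm_bounded (L - 1) 0
      (b := fun n : ℕ => (n : ℝ)) (fun n => ((hf_intOn n (Nat.cast_nonneg n)).mono_set Ioc_subset_Icc_self))
      tendsto_natCast_atTop_atTop
    filter_upwards with n
    rw [hnorm n (Nat.cast_nonneg n)]
    exact hbound n (Nat.cast_nonneg n)
  have hintIci : IntegrableOn (fun t => t * q t) (Ici 0) := by
    rwa [integrableOn_Ici_iff_integrableOn_Ioi]
  refine ⟨hintIci, ?_⟩
  rw [MeasureTheory.integral_Ici_eq_integral_Ioi]
  have htend : Tendsto (fun n : ℕ => ∫ y in (0:ℝ)..(n:ℝ), y * q y) atTop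
      (𝓝 (∫ t in Ioi (0:ℝ), t * q t)) :=
    intervalIntegral_tendsto_integral_Ioi 0 hint tendsto_natCast_atTop_atTop
  refine le_of_tendsto htend ?_
  filter_upwards with n
  exact hbound n (Nat.cast_nonneg n)
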